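/- Let 0 < ε, c < 1 be constants, M ≤ 2^{(1−ε)L}, K ≤ cε√M. Then every M-subset W of {0,1}^L satisfies |B_K(W)| ≥ ((1−c²)/K^K)·binom(εML, K), and consequently any K-substitution code C satisfies r(C) ≥ K·log(ML) − 2K·log K − O(K). -/

import Mathlib

/-- The `K`-substitution ball of a word `W`. -/
def subBall (L K : ℕ) (W : Finset (Fin L → Bool)) : Set (Finset (Fin L → Bool)) :=
  {V | ∃ g : (Fin L → Bool) → (Fin L → Bool),
    (∑ x ∈ W, hammingDist x (g x)) ≤ K ∧ V = W.image g}

/-- The generalized binomial coefficient `x choose K` for a real `x`. -/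
noncomputable def realChoose (x : ℝ) (K : ℕ) : ℝ :=
  (∏ i ∈ Finset.range K, (x - i)) / (K.factorial : ℝ)

open Finset Real

namespace Stmt13

variable {L : ℕ}

def flip (x : Fin L → Bool) (i : Fin L) : Fin L → Bool :=
  Function.update x i (!x i)

lemma flip_apply_self (x : Fin L → Bool) (i : Fin L) : flip x i i = !x i := by
  simp [flip]

lemma flip_apply_ne (x : Fin L → Bool) {i j : Fin L} (h : j ≠ i) : flip x i j = x j := by
  simp [flip, Function.update_of_ne h]

lemma flip_ne (x : Fin L → Bool) (i : Fin L) : flip x i ≠ x := by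
  intro h
  have := congrFun h i
  simp [flip_apply_self] at this

lemma flip_flip (x : Fin L → Bool) (i : Fin L) : flip (flip x i) i = x := by
  funext j
  by_cases h : j = i
  · subst h; simp [flip_apply_self]
  · rw [flip_apply_ne _ h, flip_apply_ne _ h]

lemma flip_inj_coord (x : Fin L → Bool) {i j : Fin L} (h : flip x i = flip x j) : i = j := by
  by_contra hne
  have h1 := congrFun h i
  rw [flip_apply_self, flip_apply_ne x (Ne.symm (fun hh => hne hh.symm))] at h1
  · exact (Bool.not_ne_self (x i)) h1
  
lemma hammingDist_flip (x : Fin L → Bool) (i : Fin L) : hammingDist x (flip x i) = 1 := by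
  have h : (Finset.filter (fun j => x j ≠ flip x i j) Finset.univ) = {i} := by
    ext j
    simp only [mem_filter, mem_univ, true_and, mem_singleton]
    constructor
    · intro hj
      by_contra hne
      exact hj (flip_apply_ne x hne).symm
    · intro hj; subst hj
      rw [flip_apply_self]
      exact (Bool.self_ne_not (x j))
  show (Finset.filter (fun j => x j ≠ flip x i j) Finset.univ).card = 1
  rw [h, card_singleton]


def D (W : Finset (Fin L → Bool)) : ℕ :=
  ∑ x ∈ W, ∑ j : Fin L, if flip x j ∈ W then 1 else 0

lemma two_rpow_le (t : ℝ) (h0 : 0 ≤ t) (h1 : t ≤ 1) : (2:ℝ) ^ t ≤ 1 + t := by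
  have := Real.geom_mean_le_arith_mean2_weighted (w₁ := 1 - t) (w₂ := t) (p₁ := 1) (p₂ := 2)
    (by linarith) h0 (by norm_num) (by norm_num) (by ring)
  rw [Real.one_rpow] at this
  linarith

lemma logb_one_add (t : ℝ) (h0 : 0 ≤ t) (h1 : t ≤ 1) : t ≤ Real.logb 2 (1 + t) := by
  rw [Real.le_logb_iff_rpow_le (by norm_num) (by linarith)]
  exact two_rpow_le t h0 h1

lemma ab_log {a b : ℝ} (ha : 0 ≤ a) (hab : a ≤ b) :
    a * Real.logb 2 a + b * Real.logb 2 b + 2 * a ≤ (a + b) * Real.logb 2 (a + b) := by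
  rcases eq_or_lt_of_le ha with h0 | ha'
  · simp [← h0]
  · have hb : 0 < b := lt_of_lt_of_le ha' hab
    have hab2 : 0 < a + b := by linarith
    -- claim 1 : 1 + logb 2 a ≤ logb 2 (a+b)
    have c1 : 1 + Real.logb 2 a ≤ Real.logb 2 (a + b) := by
      have : Real.logb 2 (2 * a) ≤ Real.logb 2 (a + b) := by
        apply Real.logb_le_logb_of_le (by norm_num) (by linarith) (by linarith)
      rwa [Real.logb_mul (by norm_num) (ne_of_gt ha'), Real.logb_self_eq_one (by norm_num)] at this
    -- claim 2 : a ≤ b * (logb 2 (a+b) - logb 2 b)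
    have c2 : a ≤ b * (Real.logb 2 (a + b) - Real.logb 2 b) := by
      have ht := logb_one_add (a / b) (by positivity) (by rw [div_le_one hb]; exact hab)
      have h1t : (1 : ℝ) + a / b = (a + b) / b := by field_simp; ring
      rw [h1t, Real.logb_div (by linarith) (ne_of_gt hb)] at ht
      calc a = b * (a / b) := by field_simp
        _ ≤ b * (Real.logb 2 (a + b) - Real.logb 2 b) :=
          mul_le_mul_of_nonneg_left ht (le_of_lt hb)
    have c1' : a * (1 + Real.logb 2 a) ≤ a * Real.logb 2 (a + b) :=
      mul_le_mul_of_nonneg_left c1 ha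
    nlinarith [c2, c1']

lemma harper (L : ℕ) : ∀ (n : ℕ) (W : Finset (Fin L → Bool)), W.card = n →
    (D W : ℝ) ≤ n * Real.logb 2 n := by
  intro n
  induction n using Nat.strong_induction_on with
  | _ n IH =>
  intro W hW
  by_cases hsplit : ∃ i : Fin L,
      (W.filter (fun x => x i = false)).Nonempty ∧ (W.filter (fun x => x i = true)).Nonempty
  · obtain ⟨i, h0, h1⟩ := hsplit
    set W₀ := W.filter (fun x => x i = false) with hW₀def
    set W₁ := W.filter (fun x => x i = true) with hW₁def
    have hdisj : Disjoint W₀ W₁ := by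
      rw [Finset.disjoint_left]
      intro x hx0 hx1
      rw [hW₀def, mem_filter] at hx0
      rw [hW₁def, mem_filter] at hx1
      rw [hx0.2] at hx1
      exact absurd hx1.2 (by simp)
    have hunion : W₀ ∪ W₁ = W := by
      ext x
      simp only [hW₀def, hW₁def, mem_filter, mem_union]
      rcases Bool.dichotomy (x i) with h | h <;> simp [h] <;> tauto
    have hcard : W₀.card + W₁.card = n := by
      rw [← hW, ← card_union_of_disjoint hdisj, hunion]
    have h0c : 0 < W₀.card := card_pos.mpr h0
    have h1c : 0 < W₁.card := card_pos.mpr h1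
    -- membership transfer
    have flipi : ∀ (x : Fin L → Bool) (j : Fin L), j ≠ i → flip x j i = x i := by
      intro x j hj
      exact flip_apply_ne x (Ne.symm hj)
    have memtrans : ∀ (b : Bool) (x : Fin L → Bool) (j : Fin L), x i = b → j ≠ i →
        ((flip x j ∈ W.filter (fun y => y i = b)) ↔ flip x j ∈ W) := by
      intro b x j hx hj
      rw [mem_filter, flipi x j hj, hx]
      simp
    have memcross : ∀ (b : Bool) (x : Fin L → Bool), x i = b →
        ((flip x i ∈ W.filter (fun y => y i = !b)) ↔ flip x i ∈ W) := by
      intro b x hx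
      rw [mem_filter, flip_apply_self, hx]
      simp
    -- decompose the inner sums
    have inner : ∀ (b : Bool) (x : Fin L → Bool), x ∈ W.filter (fun y => y i = b) →
        (∑ j : Fin L, if flip x j ∈ W then 1 else 0) =
          (if flip x i ∈ W.filter (fun y => y i = !b) then 1 else 0) +
            ∑ j ∈ Finset.univ.erase i, if flip x j ∈ W.filter (fun y => y i = b) then 1 else 0 := by
      intro b x hx
      rw [mem_filter] at hx
      rw [← Finset.add_sum_erase _ _ (mem_univ i)]
      congr 1
      · exact if_congr (memcross b x hx.2).symm rfl rfl
      · apply Finset.sum_congr rfl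
        intro j hj
        exact if_congr (memtrans b x j hx.2 (Finset.ne_of_mem_erase hj)).symm rfl rfl
    have innerD : ∀ (b : Bool) (x : Fin L → Bool), x ∈ W.filter (fun y => y i = b) →
        (∑ j : Fin L, if flip x j ∈ W.filter (fun y => y i = b) then 1 else 0) =
          ∑ j ∈ Finset.univ.erase i, if flip x j ∈ W.filter (fun y => y i = b) then 1 else 0 := by
      intro b x hx
      rw [mem_filter] at hx
      rw [← Finset.add_sum_erase _ _ (mem_univ i)]
      have : flip x i ∉ W.filter (fun y => y i = b) := by
        rw [mem_filter, flip_apply_self, hx.2]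
        simp
      rw [if_neg this, zero_add]
    -- the two cross-counts
    set t₀ := (W₀.filter (fun x => flip x i ∈ W₁)).card with ht₀def
    set t₁ := (W₁.filter (fun x => flip x i ∈ W₀)).card with ht₁def
    have hsum : ∀ (b : Bool), (∑ x ∈ W.filter (fun y => y i = b),
          ∑ j : Fin L, if flip x j ∈ W then 1 else 0) =
        D (W.filter (fun y => y i = b)) +
          ((W.filter (fun y => y i = b)).filter (fun x => flip x i ∈ W.filter (fun y => y i = !b))).card := by
      intro b
      rw [Finset.card_filter]
      rw [D, ← Finset.sum_add_distrib]
      apply Finset.sum_congr rfl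
      intro x hx
      rw [inner b x hx, innerD b x hx]
      ring
    have hDsplit : D W = (D W₀ + t₀) + (D W₁ + t₁) := by
      have hs : (∑ x ∈ W, ∑ j : Fin L, if flip x j ∈ W then 1 else 0)
          = (∑ x ∈ W₀, ∑ j : Fin L, if flip x j ∈ W then 1 else 0)
            + (∑ x ∈ W₁, ∑ j : Fin L, if flip x j ∈ W then 1 else 0) := by
        rw [← Finset.sum_union hdisj, hunion]
      rw [D, hs, hW₀def, hW₁def, hsum false, hsum true]
      norm_num [ht₀def, ht₁def, hW₀def, hW₁def]
    -- bounds on t₀ t₁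
    have hinj : ∀ (A B : Finset (Fin L → Bool)), (A.filter (fun x => flip x i ∈ B)).card ≤ B.card := by
      intro A B
      apply Finset.card_le_card_of_injOn (fun x => flip x i)
      · intro x hx
        exact (mem_filter.mp hx).2
      · intro x hx y hy hxy
        have := congrArg (fun z => flip z i) hxy
        simpa [flip_flip] using this
    have ht₀0 : t₀ ≤ W₀.card := Finset.card_filter_le _ _
    have ht₀1 : t₀ ≤ W₁.card := hinj W₀ W₁
    have ht₁0 : t₁ ≤ W₀.card := hinj W₁ W₀
    have ht₁1 : t₁ ≤ W₁.card := Finset.card_filter_le _ _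
    -- induction hypotheses
    have hlt0 : W₀.card < n := by omega
    have hlt1 : W₁.card < n := by omega
    have ih0 : (D W₀ : ℝ) ≤ W₀.card * Real.logb 2 W₀.card := IH _ hlt0 W₀ rfl
    have ih1 : (D W₁ : ℝ) ≤ W₁.card * Real.logb 2 W₁.card := IH _ hlt1 W₁ rfl
    -- combine
    have key : (D W : ℝ) ≤ W₀.card * Real.logb 2 W₀.card + W₁.card * Real.logb 2 W₁.card
        + ((t₀ : ℝ) + t₁) := by
      rw [hDsplit]
      push_cast
      linarith
    have c00 : (t₀ : ℝ) ≤ W₀.card := by exact_mod_cast ht₀0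
    have c01 : (t₀ : ℝ) ≤ W₁.card := by exact_mod_cast ht₀1
    have c10 : (t₁ : ℝ) ≤ W₀.card := by exact_mod_cast ht₁0
    have c11 : (t₁ : ℝ) ≤ W₁.card := by exact_mod_cast ht₁1
    have hcR : ((W₀.card : ℝ) + W₁.card) = (n : ℝ) := by exact_mod_cast hcard
    rcases le_total W₀.card W₁.card with hle | hle
    · have hab := ab_log (a := (W₀.card : ℝ)) (b := (W₁.card : ℝ))
        (by positivity) (by exact_mod_cast hle)
      rw [hcR] at hab
      linarith
    · have hab := ab_log (a := (W₁.card : ℝ)) (b := (W₀.card : ℝ))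
        (by positivity) (by exact_mod_cast hle)
      have hcR' : ((W₁.card : ℝ) + W₀.card) = (n : ℝ) := by rw [← hcR]; ring
      rw [hcR'] at hab
      linarith
  · -- base case : W has at most one element
    push_neg at hsplit
    have hsplit' : ∀ i : Fin L, (W.filter (fun x => x i = false)) = ∅ ∨
        (W.filter (fun x => x i = true)) = ∅ := by
      intro i
      rcases (W.filter (fun x => x i = false)).eq_empty_or_nonempty with h | hne
      · exact Or.inl h
      · exact Or.inr (hsplit i hne)
    have hone : W.card ≤ 1 := by
      rw [Finset.card_le_one]
      intro x hx y hy
      funext i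
      rcases hsplit' i with h | h
      · have hx' : x i = true := by
          by_contra hc
          have : x ∈ W.filter (fun z => z i = false) := by
            rw [mem_filter]; exact ⟨hx, by simpa using hc⟩
          rw [h] at this; exact absurd this (Finset.notMem_empty _)
        have hy' : y i = true := by
          by_contra hc
          have : y ∈ W.filter (fun z => z i = false) := by
            rw [mem_filter]; exact ⟨hy, by simpa using hc⟩
          rw [h] at this; exact absurd this (Finset.notMem_empty _)
        rw [hx', hy']
      · have hx' : x i = false := by
          by_contra hc
          have : x ∈ W.filter (fun z => z i = true) := by
            rw [mem_filter]; exact ⟨hx, by simpa using hc⟩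
          rw [h] at this; exact absurd this (Finset.notMem_empty _)
        have hy' : y i = false := by
          by_contra hc
          have : y ∈ W.filter (fun z => z i = true) := by
            rw [mem_filter]; exact ⟨hy, by simpa using hc⟩
          rw [h] at this; exact absurd this (Finset.notMem_empty _)
        rw [hx', hy']
    have hD0 : D W = 0 := by
      rw [D]
      apply Finset.sum_eq_zero
      intro x hx
      apply Finset.sum_eq_zero
      intro j _
      rw [if_neg]
      intro hmem
      have : flip x j = x := by
        rw [Finset.card_le_one] at hone
        exact hone _ hmem _ hx
      exact flip_ne x j this
    rw [hD0]
    have hn1 : n ≤ 1 := hW ▸ hone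
    interval_cases n
    · simp
    · simp

end Stmt13

namespace Stmt13

variable {L : ℕ}

def res (p : (Fin L → Bool) × Fin L) : Fin L → Bool := flip p.1 p.2

/-- good flips of `W` -/
def Gd (W : Finset (Fin L → Bool)) : Finset ((Fin L → Bool) × Fin L) :=
  (W ×ˢ Finset.univ).filter (fun p => flip p.1 p.2 ∉ W)

lemma Gd_card (W : Finset (Fin L → Bool)) : (Gd W).card + D W = W.card * L := by
  rw [Gd, Finset.card_filter, Finset.sum_product, D]
  rw [← Finset.sum_add_distrib]
  have : ∀ x ∈ W, ((∑ y : Fin L, if flip x y ∉ W then 1 else 0) +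
      ∑ j : Fin L, if flip x j ∈ W then 1 else 0) = L := by
    intro x _
    rw [← Finset.sum_add_distrib]
    have : ∀ j : Fin L, ((if flip x j ∉ W then 1 else 0) + if flip x j ∈ W then 1 else 0) = 1 := by
      intro j
      by_cases h : flip x j ∈ W <;> simp [h]
    rw [Finset.sum_congr rfl (fun j _ => this j)]
    simp [Finset.card_univ]
  rw [Finset.sum_congr rfl this]
  simp [mul_comm]

lemma mem_Gd {W : Finset (Fin L → Bool)} {p : (Fin L → Bool) × Fin L} (hp : p ∈ Gd W) :
    p.1 ∈ W ∧ res p ∉ W := by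
  rw [Gd, Finset.mem_filter, Finset.mem_product] at hp
  exact ⟨hp.1.1, hp.2⟩

noncomputable def gfun (S : Finset ((Fin L → Bool) × Fin L)) : (Fin L → Bool) → (Fin L → Bool) :=
  fun y => if h : ∃ p, p ∈ S ∧ p.1 = y then res h.choose else y

def Phi (W : Finset (Fin L → Bool)) (S : Finset ((Fin L → Bool) × Fin L)) :
    Finset (Fin L → Bool) :=
  (W \ S.image Prod.fst) ∪ S.image res

section S
variable {S : Finset ((Fin L → Bool) × Fin L)} {W : Finset (Fin L → Bool)}

lemma gfun_eq (hInj : Set.InjOn Prod.fst (S : Set ((Fin L → Bool) × Fin L)))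
    {p : (Fin L → Bool) × Fin L} (hp : p ∈ S) : gfun S p.1 = res p := by
  rw [gfun]
  have h : ∃ q, q ∈ S ∧ q.1 = p.1 := ⟨p, hp, rfl⟩
  rw [dif_pos h]
  exact congrArg res (hInj (by exact_mod_cast h.choose_spec.1) hp h.choose_spec.2)

lemma gfun_eq_self {y : Fin L → Bool} (hy : y ∉ S.image Prod.fst) : gfun S y = y := by
  rw [gfun, dif_neg]
  intro ⟨p, hp, hpy⟩
  exact hy (Finset.mem_image.mpr ⟨p, hp, hpy⟩)

lemma image_gfun (hInj : Set.InjOn Prod.fst (S : Set ((Fin L → Bool) × Fin L)))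
    (hSW : ∀ p ∈ S, p.1 ∈ W) : W.image (gfun S) = Phi W S := by
  ext y
  rw [Phi, Finset.mem_union, Finset.mem_image]
  constructor
  · rintro ⟨x, hx, rfl⟩
    by_cases hmem : x ∈ S.image Prod.fst
    · obtain ⟨p, hp, hpx⟩ := Finset.mem_image.mp hmem
      right
      subst hpx
      rw [gfun_eq hInj hp]
      exact Finset.mem_image_of_mem res hp
    · left
      rw [gfun_eq_self hmem]
      exact Finset.mem_sdiff.mpr ⟨hx, hmem⟩
  · rintro (hy | hy)
    · obtain ⟨hyW, hyn⟩ := Finset.mem_sdiff.mp hy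
      exact ⟨y, hyW, gfun_eq_self hyn⟩
    · obtain ⟨p, hp, rfl⟩ := Finset.mem_image.mp hy
      exact ⟨p.1, hSW p hp, gfun_eq hInj hp⟩

lemma sum_dist_gfun (hInj : Set.InjOn Prod.fst (S : Set ((Fin L → Bool) × Fin L))) :
    (∑ x ∈ W, hammingDist x (gfun S x)) ≤ S.card := by
  have hpt : ∀ x ∈ W, hammingDist x (gfun S x) ≤ if x ∈ S.image Prod.fst then 1 else 0 := by
    intro x _
    by_cases hmem : x ∈ S.image Prod.fst
    · rw [if_pos hmem]
      obtain ⟨p, hp, hpx⟩ := Finset.mem_image.mp hmem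
      subst hpx
      rw [gfun_eq hInj hp, res, hammingDist_flip]
    · rw [if_neg hmem, gfun_eq_self hmem, hammingDist_self]
  calc (∑ x ∈ W, hammingDist x (gfun S x)) ≤ ∑ x ∈ W, if x ∈ S.image Prod.fst then 1 else 0 :=
        Finset.sum_le_sum hpt
    _ = (W.filter (fun x => x ∈ S.image Prod.fst)).card := (Finset.card_filter _ _).symm
    _ ≤ (S.image Prod.fst).card := Finset.card_le_card (fun x hx => (Finset.mem_filter.mp hx).2)
    _ ≤ S.card := Finset.card_image_le

lemma Phi_mem_subBall {K : ℕ} (hInj : Set.InjOn Prod.fst (S : Set ((Fin L → Bool) × Fin L)))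
    (hSW : ∀ p ∈ S, p.1 ∈ W) (hcard : S.card = K) : Phi W S ∈ subBall L K W :=
  ⟨gfun S, hcard ▸ sum_dist_gfun hInj, (image_gfun hInj hSW).symm⟩

lemma sdiff_Phi (hSW : ∀ p ∈ S, p.1 ∈ W) (hres : ∀ p ∈ S, res p ∉ W) :
    W \ Phi W S = S.image Prod.fst := by
  ext x
  rw [Phi, Finset.mem_sdiff, Finset.mem_union, Finset.mem_sdiff]
  constructor
  · rintro ⟨hxW, hx⟩
    push_neg at hx
    exact hx.1 hxW
  · intro hx
    obtain ⟨p, hp, rfl⟩ := Finset.mem_image.mp hx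
    refine ⟨hSW p hp, ?_⟩
    push_neg
    constructor
    · intro _; exact hx
    · intro hmem
      obtain ⟨q, hq, hqe⟩ := Finset.mem_image.mp hmem
      exact absurd (hqe ▸ hSW p hp) (hres q hq)

lemma Phi_sdiff (hSW : ∀ p ∈ S, p.1 ∈ W) (hres : ∀ p ∈ S, res p ∉ W) :
    Phi W S \ W = S.image res := by
  ext y
  rw [Phi, Finset.mem_sdiff, Finset.mem_union, Finset.mem_sdiff]
  constructor
  · rintro ⟨hy | hy, hyn⟩
    · exact absurd hy.1 hyn
    · exact hy
  · intro hy
    obtain ⟨p, hp, rfl⟩ := Finset.mem_image.mp hy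
    exact ⟨Or.inr hy, hres p hp⟩

lemma recover (hInj : Set.InjOn Prod.fst (S : Set ((Fin L → Bool) × Fin L))) :
    S = ((S.image Prod.fst) ×ˢ Finset.univ).filter (fun p => gfun S p.1 = flip p.1 p.2) := by
  ext p
  rw [Finset.mem_filter, Finset.mem_product]
  constructor
  · intro hp
    exact ⟨⟨Finset.mem_image_of_mem _ hp, Finset.mem_univ _⟩, gfun_eq hInj hp⟩
  · rintro ⟨⟨h1, _⟩, h2⟩
    obtain ⟨q, hq, hqe⟩ := Finset.mem_image.mp h1
    have : gfun S p.1 = res q := hqe ▸ gfun_eq hInj hq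
    rw [this] at h2
    have h3 : flip q.1 q.2 = flip q.1 p.2 := by rw [← hqe] at h2; exact h2
    have h4 : q.2 = p.2 := flip_inj_coord q.1 h3
    have : q = p := Prod.ext hqe h4
    exact this ▸ hq

end S
end Stmt13

namespace Stmt13

variable {L : ℕ}

def good (K : ℕ) (S : Finset ((Fin L → Bool) × Fin L)) : Prop :=
  (S.image Prod.fst).card = K ∧ (S.image res).card = K

instance (K : ℕ) : DecidablePred (good (L := L) K) := fun _ => instDecidableAnd

def SS (W : Finset (Fin L → Bool)) (K : ℕ) : Finset (Finset ((Fin L → Bool) × Fin L)) :=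
  (Finset.powersetCard K (Gd W)).filter (good K)

def orderedBad (W : Finset (Fin L → Bool)) :
    Finset (((Fin L → Bool) × Fin L) × ((Fin L → Bool) × Fin L)) :=
  ((Gd W) ×ˢ (Gd W)).filter (fun pq => pq.1 ≠ pq.2 ∧ (pq.1.1 = pq.2.1 ∨ res pq.1 = res pq.2))

def badPairs (W : Finset (Fin L → Bool)) : Finset (Finset ((Fin L → Bool) × Fin L)) :=
  (orderedBad W).image (fun pq => ({pq.1, pq.2} : Finset ((Fin L → Bool) × Fin L)))

section B
variable {W : Finset (Fin L → Bool)} {K : ℕ}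

lemma mem_SS {S : Finset ((Fin L → Bool) × Fin L)} (hS : S ∈ SS W K) :
    S ⊆ Gd W ∧ S.card = K ∧ Set.InjOn Prod.fst (S : Set ((Fin L → Bool) × Fin L)) ∧
      (∀ p ∈ S, p.1 ∈ W) ∧ (∀ p ∈ S, res p ∉ W) ∧ (S.image Prod.fst).card = K ∧
      (S.image res).card = K := by
  rw [SS, Finset.mem_filter, Finset.mem_powersetCard] at hS
  obtain ⟨⟨hsub, hcard⟩, hg1, hg2⟩ := hS
  refine ⟨hsub, hcard, ?_, ?_, ?_, hg1, hg2⟩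
  · exact Finset.injOn_of_card_image_eq (by rw [hg1, hcard])
  · exact fun p hp => (mem_Gd (hsub hp)).1
  · exact fun p hp => (mem_Gd (hsub hp)).2

/-- B1 -/
lemma SS_card_eq : (SS W K).card +
    ((Finset.powersetCard K (Gd W)).filter (fun S => ¬ good K S)).card =
    ((Gd W).card).choose K := by
  rw [SS, Finset.card_filter_add_card_filter_not, Finset.card_powersetCard]

/-- B2 -/
lemma bad_subset :
    ((Finset.powersetCard K (Gd W)).filter (fun S => ¬ good K S)) ⊆
      (badPairs W).biUnion
        (fun t => (Finset.powersetCard K (Gd W)).filter (fun S => t ⊆ S)) := by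
  intro S hS
  rw [Finset.mem_filter] at hS
  obtain ⟨hmem, hbad⟩ := hS
  obtain ⟨hsub, hcard⟩ := Finset.mem_powersetCard.mp hmem
  have key : ∃ p ∈ S, ∃ q ∈ S, p ≠ q ∧ (p.1 = q.1 ∨ res p = res q) := by
    rw [good, not_and_or] at hbad
    rcases hbad with h | h
    · have : ¬ Set.InjOn Prod.fst (S : Set ((Fin L → Bool) × Fin L)) := by
        intro hinj
        exact h (by rw [Finset.card_image_of_injOn hinj, hcard])
      rw [Set.InjOn] at this
      push_neg at this
      obtain ⟨p, hp, q, hq, hpq, hne⟩ := this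
      exact ⟨p, by exact_mod_cast hp, q, by exact_mod_cast hq, hne, Or.inl hpq⟩
    · have : ¬ Set.InjOn res (S : Set ((Fin L → Bool) × Fin L)) := by
        intro hinj
        exact h (by rw [Finset.card_image_of_injOn hinj, hcard])
      rw [Set.InjOn] at this
      push_neg at this
      obtain ⟨p, hp, q, hq, hpq, hne⟩ := this
      exact ⟨p, by exact_mod_cast hp, q, by exact_mod_cast hq, hne, Or.inr hpq⟩
  obtain ⟨p, hp, q, hq, hne, hclash⟩ := key
  rw [Finset.mem_biUnion]
  refine ⟨{p, q}, ?_, ?_⟩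
  · rw [badPairs, Finset.mem_image]
    exact ⟨(p, q), by
      rw [orderedBad, Finset.mem_filter, Finset.mem_product]
      exact ⟨⟨hsub hp, hsub hq⟩, hne, hclash⟩, rfl⟩
  · rw [Finset.mem_filter]
    exact ⟨hmem, Finset.insert_subset hp (Finset.singleton_subset_iff.mpr hq)⟩

/-- B3 -/
lemma count_supersets {t : Finset ((Fin L → Bool) × Fin L)} (ht : t ∈ badPairs W) :
    ((Finset.powersetCard K (Gd W)).filter (fun S => t ⊆ S)).card ≤
      ((Gd W).card - 2).choose (K - 2) := by
  obtain ⟨pq, hpq, rfl⟩ := Finset.mem_image.mp ht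
  rw [orderedBad, Finset.mem_filter, Finset.mem_product] at hpq
  obtain ⟨⟨hp1, hp2⟩, hne, _⟩ := hpq
  have htcard : ({pq.1, pq.2} : Finset ((Fin L → Bool) × Fin L)).card = 2 :=
    Finset.card_pair hne
  have htG : ({pq.1, pq.2} : Finset ((Fin L → Bool) × Fin L)) ⊆ Gd W :=
    Finset.insert_subset hp1 (Finset.singleton_subset_iff.mpr hp2)
  have := Finset.card_le_card_of_injOn
    (f := fun S => S \ ({pq.1, pq.2} : Finset ((Fin L → Bool) × Fin L)))
    (s := (Finset.powersetCard K (Gd W)).filter (fun S => ({pq.1, pq.2} : Finset _) ⊆ S))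
    (t := Finset.powersetCard (K - 2) (Gd W \ ({pq.1, pq.2} : Finset _)))
    ?_ ?_
  · rw [Finset.card_powersetCard, Finset.card_sdiff_of_subset htG, htcard] at this
    exact this
  · intro S hS
    rw [Finset.mem_coe, Finset.mem_filter] at hS
    obtain ⟨hmem, hts⟩ := hS
    obtain ⟨hsub, hcard⟩ := Finset.mem_powersetCard.mp hmem
    rw [Finset.mem_coe, Finset.mem_powersetCard]
    constructor
    · exact fun x hx => Finset.mem_sdiff.mpr
        ⟨hsub (Finset.mem_sdiff.mp hx).1, (Finset.mem_sdiff.mp hx).2⟩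
    · rw [Finset.card_sdiff_of_subset hts, htcard, hcard]
  · intro S1 h1 S2 h2 heq
    rw [Finset.coe_filter] at h1 h2
    obtain ⟨_, ht1⟩ := h1
    obtain ⟨_, ht2⟩ := h2
    rw [← Finset.sdiff_union_of_subset ht1, ← Finset.sdiff_union_of_subset ht2]
    simp only at heq
    rw [heq]

/-- B4 -/
lemma two_mul_badPairs : 2 * (badPairs W).card ≤ (orderedBad W).card := by
  have hfib := Finset.card_eq_sum_card_fiberwise
    (f := fun pq : ((Fin L → Bool) × Fin L) × ((Fin L → Bool) × Fin L) =>
      ({pq.1, pq.2} : Finset ((Fin L → Bool) × Fin L)))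
    (s := orderedBad W) (t := badPairs W)
    (fun pq hpq => Finset.mem_image_of_mem _ hpq)
  rw [hfib]
  have : ∀ t ∈ badPairs W, 2 ≤ ((orderedBad W).filter
      (fun pq => ({pq.1, pq.2} : Finset ((Fin L → Bool) × Fin L)) = t)).card := by
    intro t ht
    obtain ⟨pq, hpq, rfl⟩ := Finset.mem_image.mp ht
    have hpq' : (pq.2, pq.1) ∈ orderedBad W := by
      rw [orderedBad, Finset.mem_filter, Finset.mem_product] at hpq ⊢
      obtain ⟨⟨a, b⟩, c, d⟩ := hpq
      refine ⟨⟨b, a⟩, Ne.symm c, ?_⟩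
      rcases d with d | d
      · exact Or.inl d.symm
      · exact Or.inr d.symm
    have hne : pq.1 ≠ pq.2 := by
      rw [orderedBad, Finset.mem_filter] at hpq
      exact hpq.2.1
    apply Finset.one_lt_card.mpr
    refine ⟨pq, ?_, (pq.2, pq.1), ?_, ?_⟩
    · rw [Finset.mem_filter]
      exact ⟨hpq, rfl⟩
    · rw [Finset.mem_filter]
      exact ⟨hpq', Finset.pair_comm _ _⟩
    · intro h
      have := congrArg Prod.fst h
      exact hne this
  calc 2 * (badPairs W).card = ∑ _t ∈ badPairs W, 2 := by
        rw [Finset.sum_const, smul_eq_mul, mul_comm]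
    _ ≤ _ := Finset.sum_le_sum this

/-- B5 -/
lemma orderedBad_card : (orderedBad W).card ≤ (Gd W).card * (2 * (L - 1)) := by
  have hsub : orderedBad W ⊆ (Gd W).biUnion (fun p =>
      ((Gd W).filter (fun q => p ≠ q ∧ (p.1 = q.1 ∨ res p = res q))).image (fun q => (p, q))) := by
    intro pq hpq
    rw [orderedBad, Finset.mem_filter, Finset.mem_product] at hpq
    rw [Finset.mem_biUnion]
    exact ⟨pq.1, hpq.1.1, Finset.mem_image.mpr ⟨pq.2, by
      rw [Finset.mem_filter]; exact ⟨hpq.1.2, hpq.2⟩, rfl⟩⟩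
  apply le_trans (Finset.card_le_card hsub)
  apply le_trans (Finset.card_biUnion_le)
  apply le_trans (Finset.sum_le_sum (g := fun _ => 2 * (L - 1)) ?_)
  · rw [Finset.sum_const, smul_eq_mul]
  · intro p _
    show _ ≤ 2 * (L - 1)
    apply le_trans Finset.card_image_le
    have hsub2 : (Gd W).filter (fun q => p ≠ q ∧ (p.1 = q.1 ∨ res p = res q)) ⊆
        ((Finset.univ.erase p.2).image (fun j => (p.1, j))) ∪
          ((Finset.univ.erase p.2).image (fun j => (flip (res p) j, j))) := by
      intro q hq
      rw [Finset.mem_filter] at hq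
      obtain ⟨_, hne, hclash⟩ := hq
      rw [Finset.mem_union]
      rcases hclash with h | h
      · left
        rw [Finset.mem_image]
        refine ⟨q.2, ?_, by rw [h]⟩
        rw [Finset.mem_erase]
        refine ⟨?_, Finset.mem_univ _⟩
        intro hj
        exact hne (Prod.ext h hj.symm)
      · right
        rw [Finset.mem_image]
        refine ⟨q.2, ?_, ?_⟩
        · rw [Finset.mem_erase]
          refine ⟨?_, Finset.mem_univ _⟩
          intro hj
          apply hne
          have hq1 : q.1 = p.1 := by
            have h' : flip p.1 p.2 = flip q.1 p.2 := by
              rw [show flip p.1 p.2 = res p from rfl, h,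
                show res q = flip q.1 q.2 from rfl, hj]
            have h'' := congrArg (fun z => flip z p.2) h'
            simpa [flip_flip] using h''.symm
          exact (Prod.ext hq1 hj).symm
        · have : q.1 = flip (res p) q.2 := by
            rw [h, show res q = flip q.1 q.2 from rfl, flip_flip]
          exact Prod.ext this.symm rfl
    apply le_trans (Finset.card_le_card hsub2)
    apply le_trans (Finset.card_union_le _ _)
    have h1 : ((Finset.univ.erase p.2).image (fun j => (p.1, j))).card ≤ L - 1 := by
      apply le_trans Finset.card_image_le
      rw [Finset.card_erase_of_mem (Finset.mem_univ _), Finset.card_univ, Fintype.card_fin]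
    have h2 : ((Finset.univ.erase p.2).image (fun j => (flip (res p) j, j))).card ≤ L - 1 := by
      apply le_trans Finset.card_image_le
      rw [Finset.card_erase_of_mem (Finset.mem_univ _), Finset.card_univ, Fintype.card_fin]
    omega

end B
end Stmt13

namespace Stmt13

variable {L : ℕ}

section C
variable {W : Finset (Fin L → Bool)} {K : ℕ}

lemma fiber_bound (hK : 1 ≤ K) {V : Finset (Fin L → Bool)}
    (hV : V ∈ (SS W K).image (Phi W)) :
    ((SS W K).filter (fun S => Phi W S = V)).card ≤ K ^ K := by
  obtain ⟨S₀, hS₀, hS₀V⟩ := Finset.mem_image.mp hV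
  obtain ⟨_, hc₀, hinj₀, hsw₀, hres₀, hf₀, hr₀⟩ := mem_SS hS₀
  -- sdiff facts for any member of the fiber
  have hWVs : ∀ S, S ∈ SS W K → Phi W S = V → W \ V = S.image Prod.fst := by
    intro S hS hPhi
    obtain ⟨_, _, hinj, hsw, hres, _, _⟩ := mem_SS hS
    rw [← hPhi, sdiff_Phi hsw hres]
  have hVWs : ∀ S, S ∈ SS W K → Phi W S = V → V \ W = S.image res := by
    intro S hS hPhi
    obtain ⟨_, _, hinj, hsw, hres, _, _⟩ := mem_SS hS
    rw [← hPhi, Phi_sdiff hsw hres]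
  have hVWne : (V \ W).Nonempty := by
    rw [hVWs S₀ hS₀ hS₀V]
    rw [← Finset.card_pos, hr₀]
    omega
  have dflt : {y // y ∈ V \ W} := ⟨hVWne.choose, hVWne.choose_spec⟩
  -- the injection into functions
  set F : Finset ((Fin L → Bool) × Fin L) → ({x // x ∈ W \ V} → {y // y ∈ V \ W}) :=
    fun S x => if h : gfun S x.1 ∈ V \ W then ⟨gfun S x.1, h⟩ else dflt with hF
  have hmem : ∀ S, S ∈ SS W K → Phi W S = V → ∀ (x : {x // x ∈ W \ V}),
      gfun S x.1 ∈ V \ W := by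
    intro S hS hPhi x
    obtain ⟨_, _, hinj, hsw, hres, _, _⟩ := mem_SS hS
    have hx : x.1 ∈ S.image Prod.fst := by rw [← hWVs S hS hPhi]; exact x.2
    obtain ⟨p, hp, hpx⟩ := Finset.mem_image.mp hx
    rw [hVWs S hS hPhi, ← hpx, gfun_eq hinj hp]
    exact Finset.mem_image_of_mem res hp
  have hcard := Finset.card_le_card_of_injOn F
    (s := (SS W K).filter (fun S => Phi W S = V))
    (t := (Finset.univ : Finset ({x // x ∈ W \ V} → {y // y ∈ V \ W})))
    (fun _ _ => Finset.mem_univ _) ?_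
  · apply le_trans hcard
    rw [Finset.card_univ, Fintype.card_fun]
    have h1 : Fintype.card {y // y ∈ V \ W} = K := by
      rw [Fintype.card_coe, hVWs S₀ hS₀ hS₀V, hr₀]
    have h2 : Fintype.card {x // x ∈ W \ V} = K := by
      rw [Fintype.card_coe, hWVs S₀ hS₀ hS₀V, hf₀]
    rw [h1, h2]
  · intro S1 hh1 S2 hh2 heq
    have h1 := Finset.mem_coe.mp hh1
    have h2 := Finset.mem_coe.mp hh2
    rw [Finset.mem_filter] at h1 h2
    obtain ⟨hS1, hP1⟩ := h1
    obtain ⟨hS2, hP2⟩ := h2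
    obtain ⟨_, _, hinj1, _, _, _, _⟩ := mem_SS hS1
    obtain ⟨_, _, hinj2, _, _, _, _⟩ := mem_SS hS2
    -- pointwise equality of gfun on W \ V
    have hgf : ∀ y, y ∈ W \ V → gfun S1 y = gfun S2 y := by
      intro y hy
      have := congrFun heq ⟨y, hy⟩
      rw [hF] at this
      simp only [dif_pos (hmem S1 hS1 hP1 ⟨y, hy⟩), dif_pos (hmem S2 hS2 hP2 ⟨y, hy⟩)] at this
      exact congrArg Subtype.val this
    rw [recover hinj1, recover hinj2]
    have himg : S1.image Prod.fst = S2.image Prod.fst := by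
      rw [← hWVs S1 hS1 hP1, ← hWVs S2 hS2 hP2]
    rw [← himg]
    apply Finset.filter_congr
    intro p hp
    rw [Finset.mem_product] at hp
    have hp1 : p.1 ∈ W \ V := by rw [hWVs S1 hS1 hP1]; exact hp.1
    rw [hgf p.1 hp1]

lemma SS_card_le (hK : 1 ≤ K) :
    (SS W K).card ≤ ((SS W K).image (Phi W)).card * K ^ K := by
  rw [Finset.card_eq_sum_card_fiberwise
    (f := Phi W) (t := (SS W K).image (Phi W)) (fun S hS => Finset.mem_image_of_mem _ hS)]
  calc ∑ V ∈ (SS W K).image (Phi W), ((SS W K).filter (fun S => Phi W S = V)).card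
      ≤ ∑ _V ∈ (SS W K).image (Phi W), K ^ K :=
        Finset.sum_le_sum (fun V hV => fiber_bound hK hV)
    _ = ((SS W K).image (Phi W)).card * K ^ K := by rw [Finset.sum_const, smul_eq_mul]

lemma image_subset_ball :
    (((SS W K).image (Phi W) : Finset (Finset (Fin L → Bool))) : Set (Finset (Fin L → Bool)))
      ⊆ subBall L K W := by
  intro V hV
  obtain ⟨S, hS, rfl⟩ := Finset.mem_image.mp (Finset.mem_coe.mp hV)
  obtain ⟨_, hc, hinj, hsw, _, _, _⟩ := mem_SS hS
  exact Phi_mem_subBall hinj hsw hc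

end C
end Stmt13

namespace Stmt13

lemma choose_id (a b : ℕ) :
    (a+2).choose (b+2) * ((b+2)*(b+1)) = ((a+2)*(a+1)) * (a.choose b) := by
  have h1 := Nat.add_one_mul_choose_eq a b
  have h2 := Nat.add_one_mul_choose_eq (a+1) (b+1)
  calc (a+2).choose (b+2) * ((b+2)*(b+1)) = ((a+2).choose (b+2) * (b+2))*(b+1) := by ring
    _ = ((a+2) * (a+1).choose (b+1)) * (b+1) := by rw [← h2]
    _ = (a+2) * ((a+1).choose (b+1) * (b+1)) := by ring
    _ = (a+2) * ((a+1) * a.choose b) := by rw [← h1]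
    _ = ((a+2)*(a+1)) * (a.choose b) := by ring

lemma good_of_card_one {L : ℕ} {W : Finset (Fin L → Bool)}
    {S : Finset ((Fin L → Bool) × Fin L)} (hS : S ∈ Finset.powersetCard 1 (Gd W)) :
    good 1 S := by
  obtain ⟨_, hcard⟩ := Finset.mem_powersetCard.mp hS
  obtain ⟨p, rfl⟩ := Finset.card_eq_one.mp hcard
  constructor <;> rw [Finset.image_singleton, Finset.card_singleton]

lemma bad_le_real {L K : ℕ} (W : Finset (Fin L → Bool)) (c2 : ℝ) (hc2 : 0 ≤ c2)
    (hK2 : 2 ≤ K) (hL1 : 1 ≤ L) (hg2 : 2 ≤ (Gd W).card)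
    (hkey : ((L:ℝ)-1) * ((K:ℝ)*((K:ℝ)-1)) ≤ c2 * (((Gd W).card : ℝ)-1)) :
    (((Finset.powersetCard K (Gd W)).filter (fun S => ¬ good K S)).card : ℝ)
      ≤ c2 * (((Gd W).card.choose K : ℕ) : ℝ) := by
  obtain ⟨a, ha⟩ : ∃ a, (Gd W).card = a + 2 := ⟨(Gd W).card - 2, by omega⟩
  obtain ⟨b, hb⟩ : ∃ b, K = b + 2 := ⟨K - 2, by omega⟩
  have hnat1 : ((Finset.powersetCard K (Gd W)).filter (fun S => ¬ good K S)).card ≤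
      (badPairs W).card * (((Gd W).card - 2).choose (K - 2)) := by
    apply le_trans (Finset.card_le_card bad_subset)
    apply le_trans Finset.card_biUnion_le
    calc ∑ t ∈ badPairs W, ((Finset.powersetCard K (Gd W)).filter (fun S => t ⊆ S)).card
        ≤ ∑ _t ∈ badPairs W, (((Gd W).card - 2).choose (K - 2)) :=
          Finset.sum_le_sum (fun t ht => count_supersets ht)
      _ = (badPairs W).card * (((Gd W).card - 2).choose (K - 2)) := by
          rw [Finset.sum_const, smul_eq_mul]
  have hbp : (badPairs W).card ≤ (Gd W).card * (L - 1) := by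
    have h1 := two_mul_badPairs (W := W)
    have h2 := orderedBad_card (W := W)
    have h3 : (Gd W).card * (2 * (L - 1)) = 2 * ((Gd W).card * (L - 1)) := by ring
    omega
  have hnat2 : ((Finset.powersetCard K (Gd W)).filter (fun S => ¬ good K S)).card ≤
      ((Gd W).card * (L - 1)) * (a.choose b) := by
    have : ((Gd W).card - 2).choose (K - 2) = a.choose b := by rw [ha, hb]; simp
    rw [this] at hnat1
    exact le_trans hnat1 (Nat.mul_le_mul_right _ hbp)
  -- move to ℝ
  have hcast : (((Finset.powersetCard K (Gd W)).filter (fun S => ¬ good K S)).card : ℝ)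
      ≤ (((Gd W).card : ℝ) * ((L:ℝ) - 1)) * ((a.choose b : ℕ) : ℝ) := by
    have := (Nat.cast_le (α := ℝ)).mpr hnat2
    push_cast [Nat.cast_sub hL1] at this ⊢
    exact_mod_cast this
  apply le_trans hcast
  -- final algebra
  have haR : ((Gd W).card : ℝ) = (a:ℝ) + 2 := by rw [ha]; push_cast; ring
  have hbR : (K : ℝ) = (b:ℝ) + 2 := by rw [hb]; push_cast; ring
  rw [haR, hbR] at hkey
  rw [haR, ha, hb]
  set X : ℝ := ((a.choose b : ℕ) : ℝ) with hX
  set C : ℝ := (((a+2).choose (b+2) : ℕ) : ℝ) with hC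
  have hidR : C * (((b:ℝ)+2)*((b:ℝ)+1)) = (((a:ℝ)+2)*((a:ℝ)+1)) * X := by
    rw [hC, hX]
    exact_mod_cast congrArg (Nat.cast (R := ℝ)) (choose_id a b)
  have hbb : (0:ℝ) < ((b:ℝ)+2)*((b:ℝ)+1) := by positivity
  have hX0 : (0:ℝ) ≤ X := by rw [hX]; positivity
  rw [← mul_le_mul_iff_of_pos_right hbb]
  have hkey' : ((L:ℝ)-1) * (((b:ℝ)+2)*((b:ℝ)+1)) ≤ c2 * ((a:ℝ)+1) := by
    have : ((b:ℝ)+2) * (((b:ℝ)+2) - 1) = ((b:ℝ)+2)*((b:ℝ)+1) := by ring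
    calc ((L:ℝ)-1) * (((b:ℝ)+2)*((b:ℝ)+1)) = ((L:ℝ)-1) * (((b:ℝ)+2)*(((b:ℝ)+2)-1)) := by ring
      _ ≤ c2 * (((a:ℝ)+2)-1) := hkey
      _ = c2 * ((a:ℝ)+1) := by ring
  calc ((a:ℝ)+2) * ((L:ℝ)-1) * X * (((b:ℝ)+2)*((b:ℝ)+1))
      = (((L:ℝ)-1) * (((b:ℝ)+2)*((b:ℝ)+1))) * (((a:ℝ)+2)*X) := by ring
    _ ≤ (c2 * ((a:ℝ)+1)) * (((a:ℝ)+2)*X) := by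
        apply mul_le_mul_of_nonneg_right hkey'
        positivity
    _ = c2 * ((((a:ℝ)+2)*((a:ℝ)+1)) * X) := by ring
    _ = c2 * (C * (((b:ℝ)+2)*((b:ℝ)+1))) := by rw [← hidR]
    _ = c2 * C * (((b:ℝ)+2)*((b:ℝ)+1)) := by ring

end Stmt13

namespace Stmt13

set_option maxHeartbeats 1000000 in
lemma conj1 {ε c : ℝ} (hε0 : 0 < ε) (hε1 : ε < 1) (hc0 : 0 < c) (hc1 : c < 1)
    (L M K : ℕ) (hM : (M : ℝ) ≤ 2 ^ ((1 - ε) * L)) (hK : (K : ℝ) ≤ c * ε * Real.sqrt M)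
    (W : Finset (Fin L → Bool)) (hW : W.card = M) :
    (1 - c ^ 2) / (K : ℝ) ^ K * realChoose (ε * M * L) K ≤ ((subBall L K W).ncard : ℝ) := by
  have hWball : W ∈ subBall L K W := by
    refine ⟨id, ?_, by rw [Finset.image_id]⟩
    simp [hammingDist_self]
  have hncard1 : 1 ≤ ((subBall L K W).ncard : ℝ) := by
    have := (Set.ncard_pos (Set.toFinite _)).mpr ⟨W, hWball⟩
    exact_mod_cast this
  rcases Nat.eq_zero_or_pos K with hK0 | hK1
  · subst hK0
    have h1 : realChoose (ε * M * L) 0 = 1 := by rw [realChoose]; simp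
    rw [h1, pow_zero]
    have h2 : (1 - c^2) / 1 * 1 = 1 - c^2 := by ring
    rw [h2]
    nlinarith
  -- main case K ≥ 1
  have hKr1 : (1:ℝ) ≤ K := by exact_mod_cast hK1
  have hM1 : 1 ≤ M := by
    rcases Nat.eq_zero_or_pos M with h | h
    · subst h
      simp only [Nat.cast_zero, Real.sqrt_zero, mul_zero] at hK
      linarith
    · exact h
  have hMr1 : (1:ℝ) ≤ M := by exact_mod_cast hM1
  have hL1 : 1 ≤ L := by
    rcases Nat.eq_zero_or_pos L with h | h
    · subst h
      rw [Nat.cast_zero, mul_zero, Real.rpow_zero] at hM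
      have hMeq : M = 1 := le_antisymm (by exact_mod_cast hM) hM1
      subst hMeq
      rw [Nat.cast_one, Real.sqrt_one, mul_one] at hK
      nlinarith
    · exact h
  have hLr1 : (1:ℝ) ≤ L := by exact_mod_cast hL1
  have hsqK : (K:ℝ)^2 ≤ c^2 * ε^2 * M := by
    have hs := Real.sq_sqrt (show (0:ℝ) ≤ M by positivity)
    have h0 := mul_self_le_mul_self (show (0:ℝ) ≤ K by positivity) hK
    nlinarith [h0, hs]
  have hsqKL : (K:ℝ)^2 * L ≤ c^2 * (ε * M * L) := by
    have t1 : (K:ℝ)^2 * L ≤ (c^2*ε^2*M)*L :=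
      mul_le_mul_of_nonneg_right hsqK (by positivity)
    have t2 : (c^2*ε^2*M)*(L:ℝ) ≤ c^2 * (ε * M * L) := by
      nlinarith [mul_nonneg (mul_nonneg (mul_nonneg (mul_nonneg (sq_nonneg c) hε0.le)
        (sub_nonneg.mpr hε1.le)) (show (0:ℝ) ≤ M by positivity))
        (show (0:ℝ) ≤ L by positivity)]
    linarith
  have hsqK2 : (K:ℝ)^2 ≤ c^2 * (ε * M * L) := by
    have : (K:ℝ)^2 ≤ (K:ℝ)^2 * L := by
      nlinarith [mul_nonneg (sq_nonneg (K:ℝ)) (sub_nonneg.mpr hLr1)]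
    linarith
  have hcc : (0:ℝ) ≤ 1 - c^2 := by nlinarith
  have hKn : (K:ℝ) ≤ ε * M * L := by
    have h1 : (K:ℝ) ≤ (K:ℝ)^2 := by
      nlinarith [mul_nonneg (show (0:ℝ) ≤ K by positivity) (by linarith : (0:ℝ) ≤ (K:ℝ) - 1)]
    have h2 : c^2*(ε*M*L) ≤ 1*(ε*M*L) :=
      mul_le_mul_of_nonneg_right (by nlinarith : c^2 ≤ 1) (by positivity)
    rw [one_mul] at h2
    linarith [hsqK2, h1, h2]
  have hn1 : (1:ℝ) ≤ ε * M * L := le_trans hKr1 hKn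
  -- lower bound on number of good flips
  have hglb : ε * M * L ≤ ((Gd W).card : ℝ) := by
    have hGd := Gd_card W
    rw [hW] at hGd
    have hDub := harper L M W hW
    have hlog : Real.logb 2 M ≤ (1 - ε) * L := by
      have h1 : Real.logb 2 M ≤ Real.logb 2 ((2:ℝ) ^ ((1 - ε) * (L:ℝ))) :=
        Real.logb_le_logb_of_le (by norm_num) (by linarith) hM
      rwa [Real.logb_rpow (by norm_num) (by norm_num)] at h1
    have hD2 : (D W : ℝ) ≤ M * ((1 - ε) * L) :=
      le_trans hDub (mul_le_mul_of_nonneg_left hlog (by positivity))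
    have hcast : ((Gd W).card : ℝ) + (D W : ℝ) = M * L := by exact_mod_cast hGd
    have hexp : (M:ℝ) * ((1-ε)*L) = M*L - ε*M*L := by ring
    rw [hexp] at hD2
    linarith [hcast, hD2]
  have hKg : K ≤ (Gd W).card := by
    have : (K:ℝ) ≤ ((Gd W).card :ℝ) := le_trans hKn hglb
    exact_mod_cast this
  have hK2g : (K:ℝ)^2 < ((Gd W).card : ℝ) := by
    have h1 : c^2 * (ε * M * L) < ε * M * L := by nlinarith [hn1]
    linarith [hsqK2, hglb]
  -- the bad count bound
  have hbad : (((Finset.powersetCard K (Gd W)).filter (fun S => ¬ good K S)).card : ℝ)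
      ≤ c^2 * (((Gd W).card.choose K : ℕ) : ℝ) := by
    rcases eq_or_lt_of_le (show 1 ≤ K from hK1) with hKeq | hK2
    · have hemp : ((Finset.powersetCard K (Gd W)).filter (fun S => ¬ good K S)) = ∅ := by
        rw [Finset.filter_eq_empty_iff]
        intro S hS
        rw [not_not]
        rw [← hKeq] at hS ⊢
        exact good_of_card_one hS
      rw [hemp]
      simp only [Finset.card_empty, Nat.cast_zero]
      positivity
    · have hK2' : 2 ≤ K := hK2
      have hKr2 : (2:ℝ) ≤ K := by exact_mod_cast hK2'
      have hg2 : 2 ≤ (Gd W).card := by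
        have h2 : (2:ℝ) ≤ ((Gd W).card : ℝ) := by
          nlinarith [hK2g, mul_le_mul hKr2 hKr2 (by norm_num : (0:ℝ) ≤ 2) (by positivity : (0:ℝ) ≤ (K:ℝ))]
        exact_mod_cast h2
      apply bad_le_real W (c^2) (by positivity) hK2' hL1 hg2
      have e1 : c^2 * (((Gd W).card : ℝ) - 1) ≥ c^2 * (ε*M*L) - 1 := by
        nlinarith [mul_le_mul_of_nonneg_left hglb (sq_nonneg c), sq_nonneg c, hc1]
      have e2 : (K:ℝ)^2 * L - 1 ≤ c^2 * (ε*M*L) - 1 := by linarith [hsqKL]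
      -- (L-1)K(K-1) ≤ K²L - 1
      have e3 : ((L:ℝ)-1) * ((K:ℝ)*((K:ℝ)-1)) ≤ (K:ℝ)^2 * L - 1 := by
        nlinarith [mul_nonneg (show (0:ℝ) ≤ (K:ℝ) by positivity) (by linarith : (0:ℝ) ≤ (L:ℝ) - 1),
          hKr2, hLr1]
      linarith
  -- counting chain
  have hSSc := SS_card_eq (W := W) (K := K)
  have hSSR : (1 - c^2) * (((Gd W).card.choose K : ℕ) : ℝ) ≤ ((SS W K).card : ℝ) := by
    have hcast : ((SS W K).card : ℝ) +
        (((Finset.powersetCard K (Gd W)).filter (fun S => ¬ good K S)).card : ℝ)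
        = (((Gd W).card.choose K : ℕ) : ℝ) := by exact_mod_cast hSSc
    nlinarith [hbad]
  have himgR : ((SS W K).card : ℝ) ≤ (((SS W K).image (Phi W)).card : ℝ) * (K:ℝ)^K := by
    have := (Nat.cast_le (α := ℝ)).mpr (SS_card_le (W := W) hK1)
    push_cast at this
    exact this
  have hballR : ((((SS W K).image (Phi W)).card : ℕ) : ℝ) ≤ ((subBall L K W).ncard : ℝ) := by
    have h := Set.ncard_le_ncard (image_subset_ball (W := W) (K := K)) (Set.toFinite _)
    rw [Set.ncard_coe_finset] at h
    exact_mod_cast h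
  -- realChoose vs choose
  have hrc : realChoose (ε*M*L) K ≤ (((Gd W).card.choose K : ℕ) : ℝ) := by
    have hdf : (((Gd W).card.descFactorial K : ℕ) : ℝ) =
        ∏ i ∈ Finset.range K, (((Gd W).card:ℝ) - i) := by
      rw [Nat.descFactorial_eq_prod_range, Nat.cast_prod]
      apply Finset.prod_congr rfl
      intro i hi
      rw [Nat.cast_sub (le_of_lt (lt_of_lt_of_le (Finset.mem_range.mp hi) hKg))]
    have hfp : (0:ℝ) < (K.factorial : ℝ) := by exact_mod_cast K.factorial_pos
    have hchoose : (((Gd W).card.choose K : ℕ) : ℝ) =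
        (∏ i ∈ Finset.range K, (((Gd W).card:ℝ) - i)) / (K.factorial : ℝ) := by
      rw [← hdf, eq_div_iff (ne_of_gt hfp)]
      have hn : (Gd W).card.choose K * K.factorial = (Gd W).card.descFactorial K := by
        rw [Nat.descFactorial_eq_factorial_mul_choose]; ring
      exact_mod_cast hn
    rw [realChoose, hchoose]
    apply (div_le_div_iff_of_pos_right hfp).mpr
    apply Finset.prod_le_prod
    · intro i hi
      have hi' : (i:ℝ) < K := by exact_mod_cast Finset.mem_range.mp hi
      linarith [hKn]
    · intro i hi
      linarith [hglb]
  -- final assembly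
  have hKK : (0:ℝ) < (K:ℝ)^K := by positivity
  have step0 : (1 - c^2) / (K:ℝ)^K * realChoose (ε*M*L) K ≤
      (1 - c^2) / (K:ℝ)^K * (((Gd W).card.choose K : ℕ) : ℝ) :=
    mul_le_mul_of_nonneg_left hrc (by positivity)
  have step1 : (1 - c^2) / (K:ℝ)^K * (((Gd W).card.choose K : ℕ) : ℝ) ≤
      ((SS W K).card : ℝ) / (K:ℝ)^K := by
    rw [div_mul_eq_mul_div]
    apply (div_le_div_iff_of_pos_right hKK).mpr
    exact hSSR
  have step2 : ((SS W K).card : ℝ) / (K:ℝ)^K ≤ (((SS W K).image (Phi W)).card : ℝ) := by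
    rw [div_le_iff₀ hKK]
    exact himgR
  linarith

end Stmt13

namespace Stmt13

lemma sum_choose_le (N : ℕ) : ∀ M : ℕ, 4 * M ≤ N →
    (∑ m ∈ Finset.range (M+1), N.choose m) ≤ 2 * N.choose M := by
  intro M
  induction M with
  | zero => intro _; simp
  | succ M ih =>
    intro h
    have h4 : 4 * M ≤ N := by omega
    have hstep : 2 * N.choose M ≤ N.choose (M+1) := by
      have hkey := Nat.choose_succ_right_eq N M
      have hNM : 2 * (M + 1) ≤ N - M := by omega
      apply Nat.le_of_mul_le_mul_right _ (show 0 < M+1 by omega)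
      rw [hkey]
      calc 2 * N.choose M * (M+1) = N.choose M * (2*(M+1)) := by ring
        _ ≤ N.choose M * (N - M) := Nat.mul_le_mul_left _ hNM
    rw [Finset.sum_range_succ]
    have := ih h4
    omega

lemma smallSets_card (L M : ℕ) :
    (Finset.univ.filter (fun V : Finset (Fin L → Bool) => V.card ≤ M)).card =
      ∑ m ∈ Finset.range (M+1), (2^L).choose m := by
  rw [Finset.card_eq_sum_card_fiberwise (f := Finset.card) (t := Finset.range (M+1))
    (fun V hV => Finset.mem_range.mpr (by
      have := (Finset.mem_filter.mp hV).2
      omega))]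
  apply Finset.sum_congr rfl
  intro m hm
  have hmM : m ≤ M := by
    have := Finset.mem_range.mp hm
    omega
  have heq : ((Finset.univ.filter (fun V : Finset (Fin L → Bool) => V.card ≤ M)).filter
      (fun V => V.card = m)) = Finset.powersetCard m (Finset.univ : Finset (Fin L → Bool)) := by
    rw [Finset.powersetCard_eq_filter, Finset.powerset_univ, Finset.filter_filter]
    apply Finset.filter_congr
    intro V _
    constructor
    · exact fun h => h.2
    · exact fun h => ⟨h ▸ hmM, h⟩
  rw [heq, Finset.card_powersetCard, Finset.card_univ, Fintype.card_fun,
    Fintype.card_fin, Fintype.card_bool]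

lemma ball_card_le {L K M : ℕ} {W : Finset (Fin L → Bool)} (hW : W.card = M)
    {V : Finset (Fin L → Bool)} (hV : V ∈ subBall L K W) : V.card ≤ M := by
  obtain ⟨g, _, rfl⟩ := hV
  exact hW ▸ Finset.card_image_le

end Stmt13


set_option maxHeartbeats 1600000 in
theorem stmt_13 (ε c : ℝ) (hε0 : 0 < ε) (hε1 : ε < 1) (hc0 : 0 < c) (hc1 : c < 1) :
    ∃ A : ℝ, ∀ L M K : ℕ,
      (M : ℝ) ≤ 2 ^ ((1 - ε) * L) → (K : ℝ) ≤ c * ε * Real.sqrt M →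
      (∀ W : Finset (Fin L → Bool), W.card = M →
        (1 - c ^ 2) / (K : ℝ) ^ K * realChoose (ε * M * L) K
          ≤ ((subBall L K W).ncard : ℝ)) ∧
      (∀ C : Finset (Finset (Fin L → Bool)),
        (∀ W ∈ C, W.card = M) →
        (∀ W ∈ C, ∀ W' ∈ C, W ≠ W' → Disjoint (subBall L K W) (subBall L K W')) →
        (K : ℝ) * Real.logb 2 (M * L) - 2 * K * Real.logb 2 K - A * K
          ≤ Real.logb 2 ((2 ^ L).choose M) - Real.logb 2 C.card) := by
  classical
  set l1 : ℝ := Real.logb 2 ((1 - c^2) * ε) with hl1def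
  set l2 : ℝ := Real.logb 2 (1 - c^2) with hl2def
  set A : ℝ := max (2/ε + Real.logb 2 (2/ε)) (|l1| + |l2| + 1) with hAdef
  refine ⟨A, ?_⟩
  intro L M K hM hK
  have hcc : (0:ℝ) < 1 - c^2 := by nlinarith
  constructor
  · intro W hW
    exact Stmt13.conj1 hε0 hε1 hc0 hc1 L M K hM hK W hW
  intro C hWc hdisj
  -- basic counting facts
  have hMN : M ≤ 2^L := by
    have h1 : (2:ℝ) ^ ((1-ε) * (L:ℝ)) ≤ (2:ℝ) ^ ((L:ℕ) : ℝ) := by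
      apply Real.rpow_le_rpow_of_exponent_le (by norm_num)
      nlinarith [Nat.cast_nonneg (α := ℝ) L]
    have h2 : (2:ℝ) ^ ((L:ℕ) : ℝ) = ((2^L : ℕ) : ℝ) := by
      rw [Real.rpow_natCast]
      push_cast
      ring
    have : (M:ℝ) ≤ ((2^L : ℕ) : ℝ) := by linarith [hM, h1, h2 ▸ h1]
    exact_mod_cast this
  have hchoosepos : 0 < (2^L).choose M := Nat.choose_pos hMN
  have hchooseposR : (1:ℝ) ≤ ((2^L).choose M : ℝ) := by exact_mod_cast hchoosepos
  have hC_le : C.card ≤ (2^L).choose M := by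
    have hsub : C ⊆ Finset.powersetCard M Finset.univ := by
      intro W hW
      rw [Finset.mem_powersetCard]
      exact ⟨Finset.subset_univ _, hWc W hW⟩
    have h2 : (Finset.powersetCard M (Finset.univ : Finset (Fin L → Bool))).card
        = (2^L).choose M := by
      rw [Finset.card_powersetCard, Finset.card_univ, Fintype.card_fun,
        Fintype.card_fin, Fintype.card_bool]
    exact h2 ▸ Finset.card_le_card hsub
  have hRHS0 : 0 ≤ Real.logb 2 ((2^L).choose M) - Real.logb 2 C.card := by
    rcases Nat.eq_zero_or_pos C.card with h0 | h1
    · rw [h0]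
      simp only [Nat.cast_zero, Real.logb_zero, sub_zero]
      exact Real.logb_nonneg (by norm_num) hchooseposR
    · have := Real.logb_le_logb_of_le (show (1:ℝ) < 2 by norm_num)
        (show (0:ℝ) < C.card by exact_mod_cast h1) (show (C.card:ℝ) ≤ (((2^L).choose M : ℕ) : ℝ) by exact_mod_cast hC_le)
      linarith
  rcases Nat.eq_zero_or_pos K with hK0 | hK1
  · subst hK0
    simp only [Nat.cast_zero, zero_mul, mul_zero, sub_zero, zero_sub, neg_zero]
    linarith [hRHS0]
  -- K ≥ 1 : basic numeric facts (as in conj1)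
  have hKr1 : (1:ℝ) ≤ K := by exact_mod_cast hK1
  have hM1 : 1 ≤ M := by
    rcases Nat.eq_zero_or_pos M with h | h
    · subst h
      simp only [Nat.cast_zero, Real.sqrt_zero, mul_zero] at hK
      linarith
    · exact h
  have hMr1 : (1:ℝ) ≤ M := by exact_mod_cast hM1
  have hL1 : 1 ≤ L := by
    rcases Nat.eq_zero_or_pos L with h | h
    · subst h
      rw [Nat.cast_zero, mul_zero, Real.rpow_zero] at hM
      have hMeq : M = 1 := le_antisymm (by exact_mod_cast hM) hM1
      subst hMeq
      rw [Nat.cast_one, Real.sqrt_one, mul_one] at hK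
      nlinarith
    · exact h
  have hLr1 : (1:ℝ) ≤ L := by exact_mod_cast hL1
  have hML1 : (1:ℝ) ≤ (M:ℝ) * L := by
    have := mul_le_mul hMr1 hLr1 (by norm_num) (by positivity)
    linarith
  have hlogK0 : 0 ≤ Real.logb 2 K := Real.logb_nonneg (by norm_num) hKr1
  have hlogM : Real.logb 2 M ≤ (1 - ε) * L := by
    have h1 : Real.logb 2 M ≤ Real.logb 2 ((2:ℝ) ^ ((1 - ε) * (L:ℝ))) :=
      Real.logb_le_logb_of_le (by norm_num) (by linarith) hM
    rwa [Real.logb_rpow (by norm_num) (by norm_num)] at h1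
  by_cases hreg : ε * L < 2
  · -- bounded regime
    have hLle : (L:ℝ) ≤ 2/ε := by
      rw [le_div_iff₀ hε0]
      nlinarith
    have hA1 : Real.logb 2 ((M:ℝ)*L) ≤ 2/ε + Real.logb 2 (2/ε) := by
      have hlogL : Real.logb 2 L ≤ Real.logb 2 (2/ε) :=
        Real.logb_le_logb_of_le (by norm_num) (by linarith) hLle
      rw [Real.logb_mul (by positivity) (by positivity)]
      have h2 : (1-ε)*(L:ℝ) ≤ L := by nlinarith
      linarith
    have hAge : 2/ε + Real.logb 2 (2/ε) ≤ A := le_max_left _ _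
    have hfin : (K:ℝ) * Real.logb 2 ((M:ℝ)*L) ≤ A * K := by
      calc (K:ℝ) * Real.logb 2 ((M:ℝ)*L) ≤ (K:ℝ) * A :=
            mul_le_mul_of_nonneg_left (le_trans hA1 hAge) (by positivity)
        _ = A * K := by ring
    have h2K : 0 ≤ 2 * (K:ℝ) * Real.logb 2 K := by positivity
    linarith
  -- main regime : ε L ≥ 2
  push_neg at hreg
  have hsqK : (K:ℝ)^2 ≤ c^2 * ε^2 * M := by
    have hs := Real.sq_sqrt (show (0:ℝ) ≤ M by positivity)
    have h0 := mul_self_le_mul_self (show (0:ℝ) ≤ K by positivity) hK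
    nlinarith [h0, hs]
  have hsqKL : (K:ℝ)^2 * L ≤ c^2 * (ε * M * L) := by
    have t1 : (K:ℝ)^2 * L ≤ (c^2*ε^2*M)*L :=
      mul_le_mul_of_nonneg_right hsqK (by positivity)
    have t2 : (c^2*ε^2*M)*(L:ℝ) ≤ c^2 * (ε * M * L) := by
      nlinarith [mul_nonneg (mul_nonneg (mul_nonneg (mul_nonneg (sq_nonneg c) hε0.le)
        (sub_nonneg.mpr hε1.le)) (show (0:ℝ) ≤ M by positivity))
        (show (0:ℝ) ≤ L by positivity)]
    linarith
  have hsqK2 : (K:ℝ)^2 ≤ c^2 * (ε * M * L) := by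
    have h3 : (K:ℝ)^2 ≤ (K:ℝ)^2 * L := by
      nlinarith [mul_nonneg (sq_nonneg (K:ℝ)) (sub_nonneg.mpr hLr1)]
    linarith
  have hKK2 : (K:ℝ) ≤ (K:ℝ)^2 := by
    nlinarith [mul_nonneg (show (0:ℝ) ≤ K by positivity) (by linarith : (0:ℝ) ≤ (K:ℝ) - 1)]
  have hKc2 : (K:ℝ) ≤ c^2 * (ε * M * L) := le_trans hKK2 hsqK2
  have hKn : (K:ℝ) ≤ ε * M * L := by
    have h2 : c^2*(ε*M*L) ≤ 1*(ε*M*L) :=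
      mul_le_mul_of_nonneg_right (by nlinarith : c^2 ≤ 1) (by positivity)
    rw [one_mul] at h2
    linarith
  -- lower bound for each factor
  have hfac : (0:ℝ) < (1 - c^2) * (ε * M * L) := by positivity
  have hfacle : ∀ i ∈ Finset.range K, (1 - c^2) * (ε * M * L) ≤ ε * M * L - i := by
    intro i hi
    have hi' : (i:ℝ) + 1 ≤ K := by exact_mod_cast Finset.mem_range.mp hi
    nlinarith [hKc2]
  -- β and its positivity
  set β : ℝ := (1 - c^2) / (K:ℝ)^K * realChoose (ε*M*L) K with hβdef
  have hKKpos : (0:ℝ) < (K:ℝ)^K := by positivity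
  have hrcpos : (0:ℝ) < realChoose (ε*M*L) K := by
    rw [realChoose]
    apply div_pos
    · apply Finset.prod_pos
      intro i hi
      exact lt_of_lt_of_le hfac (hfacle i hi)
    · exact_mod_cast K.factorial_pos
  have hβpos : 0 < β := by
    rw [hβdef]
    positivity
  -- β lower bound B₀
  have hrc_lb : ((1 - c^2) * (ε*M*L))^K / (K:ℝ)^K ≤ realChoose (ε*M*L) K := by
    rw [realChoose]
    have hp1 : ((1 - c^2) * (ε*M*L))^K ≤ ∏ i ∈ Finset.range K, (ε*M*L - i) := by
      calc ((1-c^2)*(ε*M*L))^K = ∏ _i ∈ Finset.range K, ((1-c^2)*(ε*M*L)) := by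
            rw [Finset.prod_const, Finset.card_range]
        _ ≤ ∏ i ∈ Finset.range K, (ε*M*L - i) :=
            Finset.prod_le_prod (fun i _ => le_of_lt hfac) hfacle
    have hfactle : (K.factorial : ℝ) ≤ (K:ℝ)^K := by exact_mod_cast K.factorial_le_pow
    have hfactpos : (0:ℝ) < K.factorial := by exact_mod_cast K.factorial_pos
    calc ((1 - c^2) * (ε*M*L))^K / (K:ℝ)^K ≤ ((1 - c^2) * (ε*M*L))^K / K.factorial :=
          div_le_div_of_nonneg_left (by positivity) hfactpos hfactle
      _ ≤ (∏ i ∈ Finset.range K, (ε*M*L - i)) / K.factorial :=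
          (div_le_div_iff_of_pos_right hfactpos).mpr hp1
  set B0 : ℝ := (1 - c^2) * ((1 - c^2) * (ε*M*L))^K / ((K:ℝ)^K * (K:ℝ)^K) with hB0def
  have hB0pos : 0 < B0 := by rw [hB0def]; positivity
  have hB0β : B0 ≤ β := by
    rw [hB0def, hβdef]
    calc (1 - c^2) * ((1-c^2)*(ε*M*L))^K / ((K:ℝ)^K * (K:ℝ)^K)
        = (1 - c^2)/(K:ℝ)^K * (((1-c^2)*(ε*M*L))^K / (K:ℝ)^K) := by ring
      _ ≤ (1 - c^2)/(K:ℝ)^K * realChoose (ε*M*L) K :=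
          mul_le_mul_of_nonneg_left hrc_lb (by positivity)
  -- logb of B₀
  have hlogB0 : Real.logb 2 B0 =
      l2 + (K:ℝ) * (l1 + Real.logb 2 ((M:ℝ)*L)) - 2 * K * Real.logb 2 K := by
    rw [hB0def]
    rw [Real.logb_div (by positivity) (by positivity)]
    rw [Real.logb_mul (by positivity) (by positivity)]
    rw [Real.logb_mul (by positivity) (by positivity)]
    rw [Real.logb_pow, Real.logb_pow]
    have e1 : (1 - c^2) * (ε * (M:ℝ) * L) = ((1-c^2)*ε) * ((M:ℝ)*L) := by ring
    rw [e1, Real.logb_mul (by positivity) (by positivity)]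
    rw [hl1def, hl2def]
    ring
  -- counting : (max C.card 1) * β ≤ 2 * choose
  have hM4 : 4 * M ≤ 2^L := by
    have e2 : (4:ℝ) ≤ (2:ℝ) ^ (ε * (L:ℝ)) := by
      have : (4:ℝ) = (2:ℝ) ^ (2:ℝ) := by
        rw [show (2:ℝ) = ((2:ℕ):ℝ) from by norm_num, Real.rpow_natCast]
        norm_num
      rw [this]
      exact Real.rpow_le_rpow_of_exponent_le (by norm_num) hreg
    have e3 : (4:ℝ) * M ≤ (2:ℝ)^(ε*(L:ℝ)) * (2:ℝ)^((1-ε)*(L:ℝ)) := by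
      apply mul_le_mul e2 hM (by positivity) (by positivity)
    have e4 : (2:ℝ)^(ε*(L:ℝ)) * (2:ℝ)^((1-ε)*(L:ℝ)) = ((2^L : ℕ) : ℝ) := by
      rw [← Real.rpow_add (by norm_num)]
      have : ε*(L:ℝ) + (1-ε)*L = ((L:ℕ):ℝ) := by ring
      rw [this, Real.rpow_natCast]
      push_cast
      ring
    rw [e4] at e3
    exact_mod_cast e3
  set bf : Finset (Fin L → Bool) → Finset (Finset (Fin L → Bool)) :=
    fun W => (Set.toFinite (subBall L K W)).toFinset with hbfdef
  have hballb : ∀ W : Finset (Fin L → Bool), W.card = M → β ≤ ((bf W).card : ℝ) := by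
    intro W hW
    have h1 := Stmt13.conj1 hε0 hε1 hc0 hc1 L M K hM hK W hW
    rwa [Set.ncard_eq_toFinset_card _ (Set.toFinite _)] at h1
  set small : Finset (Finset (Fin L → Bool)) :=
    Finset.univ.filter (fun V => V.card ≤ M) with hsmalldef
  have hbfsub : ∀ W ∈ C, bf W ⊆ small := by
    intro W hW V hV
    rw [hbfdef, Set.Finite.mem_toFinset] at hV
    rw [hsmalldef, Finset.mem_filter]
    exact ⟨Finset.mem_univ _, Stmt13.ball_card_le (hWc W hW) hV⟩
  have hsmall2 : (small.card : ℝ) ≤ 2 * ((2^L).choose M : ℝ) := by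
    have := Stmt13.smallSets_card L M
    have h2 := Stmt13.sum_choose_le (2^L) M hM4
    have : small.card ≤ 2 * (2^L).choose M := by
      rw [hsmalldef, Stmt13.smallSets_card L M]
      exact h2
    exact_mod_cast this
  have hcount : (max C.card 1 : ℕ) * β ≤ 2 * ((2^L).choose M : ℝ) := by
    rcases C.eq_empty_or_nonempty with hCe | hCne
    · subst hCe
      simp only [Finset.card_empty]
      obtain ⟨W₀, _, hW₀⟩ := Finset.exists_subset_card_eq
        (show M ≤ (Finset.univ : Finset (Fin L → Bool)).card by
          rw [Finset.card_univ, Fintype.card_fun, Fintype.card_fin, Fintype.card_bool]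
          omega)
      have h1 := hballb W₀ hW₀
      have h2 : bf W₀ ⊆ small := by
        intro V hV
        rw [hbfdef, Set.Finite.mem_toFinset] at hV
        rw [hsmalldef, Finset.mem_filter]
        exact ⟨Finset.mem_univ _, Stmt13.ball_card_le hW₀ hV⟩
      have h3 : ((bf W₀).card : ℝ) ≤ small.card := by
        exact_mod_cast Finset.card_le_card h2
      simp only [Nat.max_eq_right (Nat.zero_le 1), Nat.cast_one, one_mul]
      linarith
    · have hC1 : 1 ≤ C.card := Finset.card_pos.mpr hCne
      rw [Nat.max_eq_left hC1]
      have hdisjf : ∀ W ∈ C, ∀ W' ∈ C, W ≠ W' → Disjoint (bf W) (bf W') := by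
        intro W hW W' hW' hne
        rw [Finset.disjoint_left]
        intro V hV hV'
        rw [hbfdef, Set.Finite.mem_toFinset] at hV hV'
        exact Set.disjoint_left.mp (hdisj W hW W' hW' hne) hV hV'
      have hsum1 : ∑ W ∈ C, (bf W).card = (C.biUnion bf).card :=
        (Finset.card_biUnion hdisjf).symm
      have hsum2 : (C.biUnion bf).card ≤ small.card := by
        apply Finset.card_le_card
        intro V hV
        obtain ⟨W, hW, hVW⟩ := Finset.mem_biUnion.mp hV
        exact hbfsub W hW hVW
      have hsumR : ∑ W ∈ C, ((bf W).card : ℝ) ≤ small.card := by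
        rw [← Nat.cast_sum]
        exact_mod_cast hsum1 ▸ hsum2
      have hlb : (C.card : ℝ) * β ≤ ∑ W ∈ C, ((bf W).card : ℝ) := by
        calc (C.card : ℝ) * β = ∑ _W ∈ C, β := by
              rw [Finset.sum_const, nsmul_eq_mul]
          _ ≤ ∑ W ∈ C, ((bf W).card : ℝ) :=
              Finset.sum_le_sum (fun W hW => hballb W (hWc W hW))
      linarith
  -- logarithms
  have hmax1 : (1:ℝ) ≤ ((max C.card 1 : ℕ) : ℝ) := by
    have : 1 ≤ max C.card 1 := le_max_right _ _
    exact_mod_cast this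
  have hlogC : Real.logb 2 (C.card : ℝ) = Real.logb 2 ((max C.card 1 : ℕ) : ℝ) := by
    rcases Nat.eq_zero_or_pos C.card with h0 | h1
    · rw [h0]
      simp [Real.logb_zero]
    · rw [Nat.max_eq_left h1]
  have hlog2 : Real.logb 2 ((max C.card 1 : ℕ) : ℝ) + Real.logb 2 β ≤
      1 + Real.logb 2 ((2^L).choose M : ℝ) := by
    have h1 := Real.logb_le_logb_of_le (show (1:ℝ) < 2 by norm_num)
      (show (0:ℝ) < ((max C.card 1 : ℕ):ℝ) * β by positivity) hcount
    rw [Real.logb_mul (ne_of_gt (lt_of_lt_of_le zero_lt_one hmax1)) (ne_of_gt hβpos),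
      Real.logb_mul (by norm_num) (ne_of_gt (lt_of_lt_of_le zero_lt_one hchooseposR))] at h1
    rw [Real.logb_self_eq_one (by norm_num)] at h1
    linarith
  have hlogβ : Real.logb 2 B0 ≤ Real.logb 2 β :=
    Real.logb_le_logb_of_le (by norm_num) hB0pos hB0β
  -- final numeric assembly
  have hA2 : |l1| + |l2| + 1 ≤ A := le_max_right _ _
  have hA2K : (|l1| + |l2| + 1) * K ≤ A * K :=
    mul_le_mul_of_nonneg_right hA2 (by positivity)
  have ht1 : (-l1) * K ≤ |l1| * K :=
    mul_le_mul_of_nonneg_right (neg_le_abs _) (by positivity)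
  have ht2 : 0 ≤ (|l2| + 1) * ((K:ℝ) - 1) := mul_nonneg (by positivity) (by linarith)
  have ht3 : -l2 ≤ |l2| := neg_le_abs _
  have hfinal : -(A * K) ≤ (K:ℝ) * l1 + l2 - 1 := by linarith [hA2K, ht1, ht2, ht3]
  -- combine everything
  have hgoal : (K:ℝ) * Real.logb 2 ((M:ℝ)*L) - 2*K*Real.logb 2 K - A*K ≤
      Real.logb 2 ((2^L).choose M : ℝ) - Real.logb 2 (C.card : ℝ) := by
    rw [hlogC]
    have hB := hlogB0 ▸ hlogβ
    linarith [hlog2, hB, hfinal]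
  exact hgoal
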